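/- Let M be an f-matching in a multigraph G, let S₁ be a shortest augmenting trail for M, and let S₂ be a shortest augmenting trail for the matching M ⊕ S₁ obtained by augmenting along S₁. Then |S₁| ≤ |S₂|, i.e., the length of a shortest augmenting trail never decreases after augmentation. -/

import Mathlib

structure Multigraph (V E : Type) where
  fst : E → V
  snd : E → V

structure MWalk (V E : Type) where
  len : ℕ
  vs : ℕ → V
  es : ℕ → E

variable {V E : Type}

def Multigraph.links (G : Multigraph V E) (e : E) (u v : V) : Prop :=
  (G.fst e = u ∧ G.snd e = v) ∨ (G.fst e = v ∧ G.snd e = u)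

def MWalk.IsWalk (G : Multigraph V E) (W : MWalk V E) : Prop :=
  ∀ i < W.len, G.links (W.es i) (W.vs i) (W.vs (i+1))

/-- A trail is a walk with no repeated edges. -/
def MWalk.IsTrail (G : Multigraph V E) (W : MWalk V E) : Prop :=
  W.IsWalk G ∧ ∀ i < W.len, ∀ j < W.len, W.es i = W.es j → i = j

/-- Degree of `v` in the edge set `M` (loops counted twice). -/
def Multigraph.deg [DecidableEq V] [DecidableEq E] (G : Multigraph V E)
    (M : Finset E) (v : V) : ℕ :=
  (M.filter (fun e => G.fst e = v)).card + (M.filter (fun e => G.snd e = v)).card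

/-- An `f`-matching: every vertex `v` has degree at most `f v`. -/
def Multigraph.IsFMatching [DecidableEq V] [DecidableEq E] (G : Multigraph V E)
    (f : V → ℕ) (M : Finset E) : Prop :=
  ∀ v, G.deg M v ≤ f v

def MWalk.edgeSet [DecidableEq E] (W : MWalk V E) : Finset E :=
  (Finset.range W.len).image W.es

/-- Consecutive edges alternate between `M` and its complement. -/
def MWalk.Alternating [DecidableEq E] (W : MWalk V E) (M : Finset E) : Prop :=
  ∀ i, i + 1 < W.len → ((W.es i ∈ M) ↔ W.es (i+1) ∉ M)

/-- An augmenting trail: an alternating trail that starts and ends with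
unmatched edges at free (deficient) vertices; if closed, the total endpoint
deficiency is at least 2. -/
def IsAugTrail [DecidableEq V] [DecidableEq E] (G : Multigraph V E) (f : V → ℕ)
    (M : Finset E) (W : MWalk V E) : Prop :=
  W.IsTrail G ∧ 1 ≤ W.len ∧ W.len % 2 = 1 ∧ W.Alternating M ∧
  W.es 0 ∉ M ∧ W.es (W.len - 1) ∉ M ∧
  G.deg M (W.vs 0) < f (W.vs 0) ∧ G.deg M (W.vs W.len) < f (W.vs W.len) ∧
  (W.vs 0 = W.vs W.len → G.deg M (W.vs 0) + 2 ≤ f (W.vs 0))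

/-- A shortest augmenting trail (sat). -/
def IsSAT [DecidableEq V] [DecidableEq E] (G : Multigraph V E) (f : V → ℕ)
    (M : Finset E) (W : MWalk V E) : Prop :=
  IsAugTrail G f M W ∧ ∀ W' : MWalk V E, IsAugTrail G f M W' → W.len ≤ W'.len

open Finset
section
variable {V E : Type}
variable [DecidableEq V] [DecidableEq E] (G : Multigraph V E)

lemma deg_eq_sum (M : Finset E) (v : V) :
    G.deg M v = ∑ e ∈ M, ((if G.fst e = v then 1 else 0) + (if G.snd e = v then 1 else 0)) := by
  rw [Multigraph.deg, Finset.sum_add_distrib, Finset.card_filter, Finset.card_filter]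

lemma deg_union {A B : Finset E} (h : Disjoint A B) (v : V) :
    G.deg (A ∪ B) v = G.deg A v + G.deg B v := by
  simp only [deg_eq_sum, Finset.sum_union h]

lemma deg_sdiff_inter (A B : Finset E) (v : V) :
    G.deg (A \ B) v + G.deg (A ∩ B) v = G.deg A v := by
  rw [← deg_union G (Finset.disjoint_sdiff_inter A B)]
  congr 1
  exact Finset.sdiff_union_inter A B

lemma deg_pos_exists {X : Finset E} {v : V} (h : 0 < G.deg X v) :
    ∃ e ∈ X, G.fst e = v ∨ G.snd e = v := by
  by_contra hc
  push_neg at hc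
  rw [deg_eq_sum] at h
  rw [Finset.sum_eq_zero (fun e he => by simp [(hc e he).1, (hc e he).2])] at h
  omega

/-- telescoping -/
lemma telescope (g : ℕ → ℕ) (n : ℕ) :
    (∑ i ∈ range n, if Even i then g i + g (i+1) else 0) + (if Even n then g n else 0)
      = (∑ i ∈ range n, if ¬ Even i then g i + g (i+1) else 0) + g 0
        + (if Even n then 0 else g n) := by
  induction n with
  | zero => simp
  | succ n ih =>
    rw [Finset.sum_range_succ, Finset.sum_range_succ]
    by_cases h : Even n <;>
      simp [h, Nat.even_add_one] at ih ⊢ <;> omega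
end
section
variable {V E : Type}
variable [DecidableEq V] [DecidableEq E] (G : Multigraph V E)
lemma deg_mono {A B : Finset E} (h : A ⊆ B) (v : V) : G.deg A v ≤ G.deg B v := by
  unfold Multigraph.deg
  have h1 := Finset.card_le_card (Finset.filter_subset_filter (fun e => G.fst e = v) h)
  have h2 := Finset.card_le_card (Finset.filter_subset_filter (fun e => G.snd e = v) h)
  omega
end
set_option linter.unusedSectionVars false
section
variable {V E : Type}
variable [DecidableEq V] [DecidableEq E] (G : Multigraph V E)

lemma mem_iff_odd {W : MWalk V E} {M : Finset E} (halt : W.Alternating M)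
    (h0 : W.es 0 ∉ M) : ∀ i < W.len, (W.es i ∈ M ↔ Odd i) := by
  intro i
  induction i with
  | zero => intro _; simp [h0]
  | succ i ih =>
    intro hi
    have h1 := halt i (by omega)
    have h2 := ih (by omega)
    rw [Nat.odd_add_one]
    tauto

lemma links_ind {W : MWalk V E} (hW : W.IsWalk G) {i : ℕ} (hi : i < W.len) (v : V) :
    ((if G.fst (W.es i) = v then 1 else 0) + (if G.snd (W.es i) = v then 1 else 0) : ℕ)
      = (if W.vs i = v then 1 else 0) + (if W.vs (i+1) = v then 1 else 0) := by
  rcases hW i hi with ⟨h1, h2⟩ | ⟨h1, h2⟩ <;> rw [h1, h2] <;> ring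

lemma deg_filter_image {W : MWalk V E} (hW : W.IsWalk G)
    (hinj : ∀ i < W.len, ∀ j < W.len, W.es i = W.es j → i = j)
    (p : ℕ → Prop) [DecidablePred p] (v : V) :
    G.deg (((Finset.range W.len).filter p).image W.es) v
      = ∑ i ∈ Finset.range W.len,
          if p i then ((if W.vs i = v then 1 else 0) + (if W.vs (i+1) = v then 1 else 0)) else 0 := by
  rw [deg_eq_sum, Finset.sum_image, Finset.sum_filter]
  · apply Finset.sum_congr rfl
    intro i hi
    rw [Finset.mem_range] at hi
    by_cases hp : p i
    · simp only [if_pos hp]; exact links_ind G hW hi v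
    · simp only [if_neg hp]
  · intro i hi j hj
    simp only [Finset.mem_coe, Finset.mem_filter, Finset.mem_range] at hi hj
    exact hinj i hi.1 j hj.1

lemma edge_sdiff_eq {W : MWalk V E} {M : Finset E} (halt : W.Alternating M)
    (h0 : W.es 0 ∉ M) :
    W.edgeSet \ M = ((Finset.range W.len).filter (fun i => Even i)).image W.es := by
  ext e
  simp only [MWalk.edgeSet, Finset.mem_sdiff, Finset.mem_image, Finset.mem_filter,
    Finset.mem_range]
  constructor
  · rintro ⟨⟨i, hi, rfl⟩, hm⟩
    refine ⟨i, ⟨hi, ?_⟩, rfl⟩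
    have := mem_iff_odd halt h0 i hi
    rw [← Nat.not_odd_iff_even]; tauto
  · rintro ⟨i, ⟨hi, hp⟩, rfl⟩
    have := mem_iff_odd halt h0 i hi
    exact ⟨⟨i, hi, rfl⟩, by rw [← Nat.not_odd_iff_even] at hp; tauto⟩

lemma edge_inter_eq {W : MWalk V E} {M : Finset E} (halt : W.Alternating M)
    (h0 : W.es 0 ∉ M) :
    W.edgeSet ∩ M = ((Finset.range W.len).filter (fun i => ¬ Even i)).image W.es := by
  ext e
  simp only [MWalk.edgeSet, Finset.mem_inter, Finset.mem_image, Finset.mem_filter,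
    Finset.mem_range]
  constructor
  · rintro ⟨⟨i, hi, rfl⟩, hm⟩
    refine ⟨i, ⟨hi, ?_⟩, rfl⟩
    have := mem_iff_odd halt h0 i hi
    rw [← Nat.not_odd_iff_even]; tauto
  · rintro ⟨i, ⟨hi, hp⟩, rfl⟩
    have := mem_iff_odd halt h0 i hi
    exact ⟨⟨i, hi, rfl⟩, by rw [← Nat.not_odd_iff_even] at hp; tauto⟩

/-- The key parity-counting identity for alternating trails. -/
lemma count_key {W : MWalk V E} {M : Finset E} (hW : W.IsWalk G)
    (hinj : ∀ i < W.len, ∀ j < W.len, W.es i = W.es j → i = j)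
    (halt : W.Alternating M) (h0 : W.es 0 ∉ M) (v : V) :
    G.deg (W.edgeSet \ M) v + (if Even W.len then (if W.vs W.len = v then 1 else 0) else 0)
      = G.deg (W.edgeSet ∩ M) v + (if W.vs 0 = v then 1 else 0)
        + (if Even W.len then 0 else (if W.vs W.len = v then 1 else 0)) := by
  rw [edge_sdiff_eq halt h0, edge_inter_eq halt h0,
    deg_filter_image G hW hinj, deg_filter_image G hW hinj]
  exact telescope (fun i => if W.vs i = v then 1 else 0) W.len
end
section
set_option linter.unusedSectionVars false
variable {V E : Type}
variable [DecidableEq V] [DecidableEq E] (G : Multigraph V E)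

lemma flip_deg {W : MWalk V E} {M : Finset E} (hW : W.IsWalk G)
    (hinj : ∀ i < W.len, ∀ j < W.len, W.es i = W.es j → i = j)
    (halt : W.Alternating M) (h0 : W.es 0 ∉ M) (hodd : W.len % 2 = 1) (v : V) :
    G.deg (symmDiff M W.edgeSet) v
      = G.deg M v + (if W.vs 0 = v then 1 else 0) + (if W.vs W.len = v then 1 else 0) := by
  have hkey := count_key G hW hinj halt h0 v
  have hne : ¬ Even W.len := by rw [Nat.even_iff]; omega
  rw [if_neg hne, if_neg hne] at hkey
  have hd : symmDiff M W.edgeSet = (M \ W.edgeSet) ∪ (W.edgeSet \ M) := by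
    rw [symmDiff_def]; rfl
  rw [hd, deg_union G (by
    refine Finset.disjoint_left.mpr ?_
    intro e he hf
    rw [Finset.mem_sdiff] at he hf
    exact he.2 hf.1)]
  have h1 := deg_sdiff_inter G M W.edgeSet v
  have h2 : G.deg (W.edgeSet ∩ M) v = G.deg (M ∩ W.edgeSet) v := by
    rw [Finset.inter_comm]
  omega

lemma flip_matching {W : MWalk V E} {M : Finset E} {f : V → ℕ}
    (hM : G.IsFMatching f M) (hA : IsAugTrail G f M W) :
    G.IsFMatching f (symmDiff M W.edgeSet) := by
  obtain ⟨⟨hW, hinj⟩, hlen, hodd, halt, h0, _, hfree0, hfree1, hcl⟩ := hA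
  intro v
  rw [flip_deg G hW hinj halt h0 hodd v]
  by_cases h1 : W.vs 0 = v <;> by_cases h2 : W.vs W.len = v <;>
    simp only [h1, h2, if_pos, if_neg, if_true, if_false]
  · have := hcl (h1.trans h2.symm)
    rw [h1] at this; simp [this]
  · rw [← h1]; simp; omega
  · rw [← h2]; simp; omega
  · simp [hM v]

lemma trail_card {W : MWalk V E}
    (hinj : ∀ i < W.len, ∀ j < W.len, W.es i = W.es j → i = j) :
    W.edgeSet.card = W.len := by
  rw [MWalk.edgeSet, Finset.card_image_of_injOn, Finset.card_range]
  intro i hi j hj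
  rw [Finset.mem_coe, Finset.mem_range] at hi hj
  exact hinj i hi j hj

lemma edgeSet_card_le (W : MWalk V E) : W.edgeSet.card ≤ W.len := by
  rw [MWalk.edgeSet]
  exact le_trans (Finset.card_image_le) (le_of_eq (Finset.card_range _))

lemma mem_symmDiff_of_not_mem {M F : Finset E} {e : E} (h : e ∉ F) :
    (e ∈ symmDiff M F ↔ e ∈ M) := by
  rw [Finset.mem_symmDiff]; tauto
end
section
set_option linter.unusedSectionVars false
variable {V E : Type}
variable [DecidableEq V] [DecidableEq E] (G : Multigraph V E)

/-- Partial alternating trail starting at `a` with edges inside `D`. -/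
def PT (G : Multigraph V E) [DecidableEq E] (M D : Finset E) (a : V) (T : MWalk V E) : Prop :=
  T.IsWalk G ∧ (∀ i < T.len, ∀ j < T.len, T.es i = T.es j → i = j) ∧
  T.Alternating M ∧ T.es 0 ∉ M ∧ T.vs 0 = a ∧ 1 ≤ T.len ∧ T.edgeSet ⊆ D

lemma PT_extend {M D : Finset E} {a : V} {T : MWalk V E} (hT : PT G M D a T) {e : E}
    (he : e ∈ D) (hnew : e ∉ T.edgeSet)
    (hinc : G.fst e = T.vs T.len ∨ G.snd e = T.vs T.len)
    (hmem : (T.es (T.len - 1) ∈ M) ↔ e ∉ M) :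
    ∃ T' : MWalk V E, PT G M D a T' ∧ T'.len = T.len + 1 := by
  obtain ⟨hW, hinj, halt, h0, ha, hlen, hsub⟩ := hT
  set w : V := if G.fst e = T.vs T.len then G.snd e else G.fst e with hw
  refine ⟨⟨T.len + 1,
    fun i => if i = T.len + 1 then w else T.vs i,
    fun i => if i = T.len then e else T.es i⟩, ⟨?_, ?_, ?_, ?_, ?_, ?_, ?_⟩, rfl⟩
  · -- walk
    intro i hi
    dsimp only at hi ⊢
    rcases Nat.lt_or_ge i T.len with h | h
    · rw [if_neg (by omega), if_neg (by omega), if_neg (by omega)]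
      exact hW i h
    · have hi' : i = T.len := by omega
      subst hi'
      rw [show (if T.len = T.len then e else T.es T.len) = e from if_pos rfl,
          show (if T.len = T.len + 1 then w else T.vs T.len) = T.vs T.len from if_neg (by omega),
          show (if T.len + 1 = T.len + 1 then w else T.vs (T.len+1)) = w from if_pos rfl]
      by_cases hf : G.fst e = T.vs T.len
      · exact Or.inl ⟨hf, by rw [hw, if_pos hf]⟩
      · rcases hinc with h' | h'
        · exact absurd h' hf
        · exact Or.inr ⟨by rw [hw, if_neg hf], h'⟩
  · -- injective edges
    intro i hi j hj hij
    dsimp only at hi hj hij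
    have hTes : ∀ k, k < T.len → T.es k ∈ T.edgeSet := by
      intro k hk
      exact Finset.mem_image.mpr ⟨k, Finset.mem_range.mpr hk, rfl⟩
    by_cases h1 : i = T.len <;> by_cases h2 : j = T.len
    · omega
    · rw [if_pos h1, if_neg h2] at hij
      exact absurd (hTes j (by omega)) (by rw [← hij]; exact hnew)
    · rw [if_neg h1, if_pos h2] at hij
      exact absurd (hTes i (by omega)) (by rw [hij]; exact hnew)
    · rw [if_neg h1, if_neg h2] at hij
      exact hinj i (by omega) j (by omega) hij
  · -- alternating
    intro i hi
    dsimp only at hi ⊢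
    by_cases h1 : i + 1 = T.len
    · rw [if_neg (by omega), if_pos h1]
      have : i = T.len - 1 := by omega
      rw [this]
      exact hmem
    · rw [if_neg (by omega), if_neg h1]
      exact halt i (by omega)
  · dsimp only
    rw [if_neg (by omega)]
    exact h0
  · dsimp only
    rw [if_neg (by omega)]
    exact ha
  · dsimp only; omega
  · intro e' he'
    simp only [MWalk.edgeSet, Finset.mem_image, Finset.mem_range] at he'
    obtain ⟨i, hi, hie⟩ := he'
    by_cases h1 : i = T.len
    · rw [if_pos h1] at hie
      rw [← hie]; exact he
    · rw [if_neg h1] at hie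
      exact hsub (Finset.mem_image.mpr ⟨i, Finset.mem_range.mpr (by omega), hie⟩)
end
section
set_option linter.unusedSectionVars false
variable {V E : Type}
variable [DecidableEq V] [DecidableEq E] (G : Multigraph V E)

lemma exists_aug (f : V → ℕ) {M N : Finset E} (hM : G.IsFMatching f M)
    (hN : G.IsFMatching f N)
    (hle : ∀ v, G.deg M v ≤ G.deg N v) {a : V} (ha : G.deg M a + 1 ≤ G.deg N a) :
    ∃ T : MWalk V E, IsAugTrail G f M T ∧ T.edgeSet ⊆ symmDiff M N ∧
      G.deg M (T.vs 0) + 1 ≤ G.deg N (T.vs 0) ∧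
      G.deg M (T.vs T.len) + 1 ≤ G.deg N (T.vs T.len) ∧
      (T.vs 0 = T.vs T.len → G.deg M (T.vs 0) + 2 ≤ G.deg N (T.vs 0)) := by
  classical
  set D := symmDiff M N with hD
  have hmemD : ∀ e, e ∈ D ↔ (e ∈ M ∧ e ∉ N) ∨ (e ∈ N ∧ e ∉ M) := by
    intro e; rw [hD, Finset.mem_symmDiff]
  have hNid : ∀ v, G.deg (N \ M) v + G.deg (N ∩ M) v = G.deg N v :=
    fun v => deg_sdiff_inter G N M v
  have hMid : ∀ v, G.deg (M \ N) v + G.deg (M ∩ N) v = G.deg M v :=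
    fun v => deg_sdiff_inter G M N v
  have hcomm : ∀ v, G.deg (N ∩ M) v = G.deg (M ∩ N) v := fun v => by rw [Finset.inter_comm]
  -- initial one-edge trail
  have hpos : 0 < G.deg (N \ M) a := by
    have h1 := hNid a; have h2 := hMid a; have h3 := hcomm a; omega
  obtain ⟨e0, he0, hinc0⟩ := deg_pos_exists G hpos
  rw [Finset.mem_sdiff] at he0
  have he0D : e0 ∈ D := (hmemD e0).mpr (Or.inr he0)
  have hPT0 : PT G M D a ⟨1, fun i => if i = 0 then a
      else (if G.fst e0 = a then G.snd e0 else G.fst e0), fun _ => e0⟩ := by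
    refine ⟨?_, ?_, ?_, ?_, ?_, ?_, ?_⟩
    · intro i hi
      dsimp only at hi ⊢
      have hi0 : i = 0 := by omega
      subst hi0
      rw [show ((if (0:ℕ) = 0 then a
        else (if G.fst e0 = a then G.snd e0 else G.fst e0))) = a from if_pos rfl]
      rw [show ((if (0+1:ℕ) = 0 then a
        else (if G.fst e0 = a then G.snd e0 else G.fst e0)))
          = (if G.fst e0 = a then G.snd e0 else G.fst e0) from if_neg (by omega)]
      by_cases hf : G.fst e0 = a
      · exact Or.inl ⟨hf, (if_pos hf).symm⟩
      · rcases hinc0 with h' | h'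
        · exact absurd h' hf
        · exact Or.inr ⟨(if_neg hf).symm, h'⟩
    · intro i hi j hj _
      dsimp only at hi hj
      omega
    · intro i hi
      dsimp only at hi
      omega
    · exact he0.2
    · simp
    · exact le_refl 1
    · intro e' he'
      simp only [MWalk.edgeSet, Finset.mem_image, Finset.mem_range] at he'
      obtain ⟨i, _, rfl⟩ := he'
      exact he0D
  have hbound : ∀ T : MWalk V E, PT G M D a T → T.len ≤ D.card := by
    intro T hT
    rw [← trail_card hT.2.1]
    exact Finset.card_le_card hT.2.2.2.2.2.2
  set P : ℕ → Prop := fun n => ∃ T : MWalk V E, PT G M D a T ∧ T.len = n with hPdef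
  have hP1 : P 1 := ⟨_, hPT0, rfl⟩
  have hPn : P (Nat.findGreatest P D.card) :=
    Nat.findGreatest_spec (m := 1) (hbound _ hPT0) hP1
  obtain ⟨T, hPT, hTn⟩ := hPn
  have hmax : ∀ T' : MWalk V E, PT G M D a T' → T'.len ≤ T.len := by
    intro T' hT'
    rw [hTn]
    exact Nat.le_findGreatest (hbound _ hT') ⟨T', hT', rfl⟩
  obtain ⟨hW, hinj, halt, h0, ha0, hlen1, hsub⟩ := hPT
  have hpar := mem_iff_odd halt h0
  set v := T.vs T.len with hv
  have ckey := count_key G hW hinj halt h0 v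
  rw [ha0] at ckey
  -- subset facts
  have hTM : T.edgeSet ∩ M ⊆ M \ N := by
    intro e he
    rw [Finset.mem_inter] at he
    rw [Finset.mem_sdiff]
    have := (hmemD e).mp (hsub he.1)
    tauto
  have hTsd : T.edgeSet \ M = (N \ M) ∩ T.edgeSet := by
    ext e
    simp only [Finset.mem_sdiff, Finset.mem_inter]
    constructor
    · rintro ⟨h1, h2⟩
      have := (hmemD e).mp (hsub h1)
      tauto
    · tauto
  have hTMeq : (M \ N) ∩ T.edgeSet = T.edgeSet ∩ M := by
    ext e
    simp only [Finset.mem_sdiff, Finset.mem_inter]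
    constructor
    · tauto
    · intro h
      have := (hmemD e).mp (hsub h.1)
      tauto
  -- numeric facts at v
  have hNv := hNid v
  have hMv := hMid v
  have hcv := hcomm v
  have hlev := hle v
  have hsd1 := deg_sdiff_inter G (N \ M) T.edgeSet v
  have hsd2 := deg_sdiff_inter G (M \ N) T.edgeSet v
  have heq1 : G.deg ((N \ M) ∩ T.edgeSet) v = G.deg (T.edgeSet \ M) v := by rw [hTsd]
  have heq2 : G.deg ((M \ N) ∩ T.edgeSet) v = G.deg (T.edgeSet ∩ M) v := by rw [hTMeq]
  have hmono := deg_mono G hTM v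
  rcases Nat.even_or_odd T.len with hev | hodd
  · -- even length: extend with an unmatched edge, contradiction
    exfalso
    rw [if_pos hev, if_pos hev] at ckey
    rw [if_pos (rfl : v = v)] at ckey
    have hpos2 : 0 < G.deg ((N \ M) \ T.edgeSet) v := by
      by_cases hav : a = v
      · rw [if_pos hav] at ckey
        rw [hav] at ha
        omega
      · rw [if_neg hav] at ckey
        omega
    obtain ⟨e, heE, hincE⟩ := deg_pos_exists G hpos2
    rw [Finset.mem_sdiff, Finset.mem_sdiff] at heE
    have hesM : T.es (T.len - 1) ∈ M := by
      refine (hpar (T.len - 1) (by omega)).mpr ?_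
      rw [Nat.even_iff] at hev
      rw [Nat.odd_iff]
      omega
    obtain ⟨T', hT', hlen'⟩ := PT_extend G ⟨hW, hinj, halt, h0, ha0, hlen1, hsub⟩
      ((hmemD e).mpr (Or.inr heE.1)) heE.2 hincE
      (iff_of_true hesM heE.1.2)
    have := hmax T' hT'
    omega
  · rw [if_neg (Nat.not_even_iff_odd.mpr hodd), if_neg (Nat.not_even_iff_odd.mpr hodd)] at ckey
    rw [if_pos (rfl : v = v)] at ckey
    have hesNM : T.es (T.len - 1) ∉ M := by
      intro h
      have := (hpar (T.len - 1) (by omega)).mp h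
      rw [Nat.odd_iff] at this hodd
      omega
    by_cases hstop : G.deg M v + 1 ≤ G.deg N v ∧ (T.vs 0 = v → G.deg M v + 2 ≤ G.deg N v)
    · -- T is the desired augmenting trail
      refine ⟨T, ⟨⟨hW, hinj⟩, hlen1, Nat.odd_iff.mp hodd, halt, h0, hesNM, ?_, ?_, ?_⟩,
        hsub, ?_, ?_, ?_⟩
      · rw [ha0]
        have := hN a
        omega
      · rw [← hv]
        have := hN v
        have := hstop.1
        omega
      · intro hcl
        rw [ha0, ← hv] at hcl
        rw [ha0, hcl]
        have h2 := hstop.2 (by rw [ha0]; exact hcl)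
        have := hN v
        omega
      · rw [ha0]
        exact ha
      · rw [← hv]
        exact hstop.1
      · intro hcl
        rw [ha0, ← hv] at hcl
        rw [ha0, hcl]
        exact hstop.2 (by rw [ha0]; exact hcl)
    · -- extend with a matched edge, contradiction
      exfalso
      push_neg at hstop
      rw [ha0] at hstop
      have hband : G.deg N v ≤ G.deg M v + 1 := by
        by_cases h : G.deg M v + 1 ≤ G.deg N v
        · have := (hstop h).2; omega
        · omega
      have hpos2 : 0 < G.deg ((M \ N) \ T.edgeSet) v := by
        by_cases hav : a = v
        · rw [if_pos hav] at ckey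
          omega
        · rw [if_neg hav] at ckey
          have hVeq : G.deg N v ≤ G.deg M v := by
            by_cases h : G.deg M v + 1 ≤ G.deg N v
            · exact absurd (hstop h).1 hav
            · omega
          omega
      obtain ⟨e, heE, hincE⟩ := deg_pos_exists G hpos2
      rw [Finset.mem_sdiff, Finset.mem_sdiff] at heE
      obtain ⟨T', hT', hlen'⟩ := PT_extend G ⟨hW, hinj, halt, h0, ha0, hlen1, hsub⟩
        ((hmemD e).mpr (Or.inl heE.1)) heE.2 hincE
        (iff_of_false hesNM (by simp [heE.1.1]))
      have := hmax T' hT'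
      omega
end

set_option maxHeartbeats 4000000

/-- Hopcroft–Karp / Karzanov monotonicity: if S₁ is a shortest augmenting trail
for the f-matching M and S₂ is a shortest augmenting trail for M ⊕ S₁, then
|S₁| ≤ |S₂|. -/
theorem stmt_0 [DecidableEq V] [DecidableEq E] (G : Multigraph V E) (f : V → ℕ)
    (M : Finset E) (hM : G.IsFMatching f M) (S₁ S₂ : MWalk V E)
    (h1 : IsSAT G f M S₁)
    (h2 : IsSAT G f (symmDiff M S₁.edgeSet) S₂) :
    S₁.len ≤ S₂.len := by
  obtain ⟨hA1, hmin1⟩ := h1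
  obtain ⟨hA2, hmin2⟩ := h2
  have hM' : G.IsFMatching f (symmDiff M S₁.edgeSet) := flip_matching G hM hA1
  have hNm : G.IsFMatching f (symmDiff (symmDiff M S₁.edgeSet) S₂.edgeSet) :=
    flip_matching G hM' hA2
  set N := symmDiff (symmDiff M S₁.edgeSet) S₂.edgeSet with hNdef
  obtain ⟨⟨hW1, hinj1⟩, hlen1, hodd1, halt1, h01, -, -, -, -⟩ := hA1
  obtain ⟨⟨hW2, hinj2⟩, hlen2, hodd2, halt2, h02, -, -, -, -⟩ := hA2
  have hdeg1 : ∀ v, G.deg (symmDiff M S₁.edgeSet) v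
      = G.deg M v + (if S₁.vs 0 = v then 1 else 0) + (if S₁.vs S₁.len = v then 1 else 0) :=
    fun v => flip_deg G hW1 hinj1 halt1 h01 hodd1 v
  have hdeg2 : ∀ v, G.deg N v
      = G.deg (symmDiff M S₁.edgeSet) v + (if S₂.vs 0 = v then 1 else 0)
        + (if S₂.vs S₂.len = v then 1 else 0) :=
    fun v => flip_deg G hW2 hinj2 halt2 h02 hodd2 v
  have hdegN : ∀ v, G.deg N v
      = G.deg M v + ((if S₁.vs 0 = v then 1 else 0) + (if S₁.vs S₁.len = v then 1 else 0)
        + ((if S₂.vs 0 = v then 1 else 0) + (if S₂.vs S₂.len = v then 1 else 0))) := by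
    intro v
    have := hdeg1 v
    have := hdeg2 v
    omega
  have hle : ∀ v, G.deg M v ≤ G.deg N v := by
    intro v
    have := hdegN v
    omega
  have haS : G.deg M (S₁.vs 0) + 1 ≤ G.deg N (S₁.vs 0) := by
    have h := hdegN (S₁.vs 0)
    rw [if_pos rfl] at h
    omega
  obtain ⟨T₁, hT1aug, hT1sub, hT1s, hT1e, hT1cl⟩ := exists_aug G f hM hNm hle haS
  have hM₁ : G.IsFMatching f (symmDiff M T₁.edgeSet) := flip_matching G hM hT1aug
  obtain ⟨⟨hWT1, hinjT1⟩, hlenT1, hoddT1, haltT1, h0T1, -, -, -, -⟩ := id hT1aug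
  have hdegT1 : ∀ v, G.deg (symmDiff M T₁.edgeSet) v
      = G.deg M v + (if T₁.vs 0 = v then 1 else 0) + (if T₁.vs T₁.len = v then 1 else 0) :=
    fun v => flip_deg G hWT1 hinjT1 haltT1 h0T1 hoddT1 v
  have hle2 : ∀ v, G.deg (symmDiff M T₁.edgeSet) v ≤ G.deg N v := by
    intro v
    have h := hdegT1 v
    by_cases hb0 : T₁.vs 0 = v <;> by_cases hb1 : T₁.vs T₁.len = v
    · have h2 := hT1cl (hb0.trans hb1.symm)
      rw [hb0] at h2
      rw [if_pos hb0, if_pos hb1] at h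
      omega
    · have h2 := hT1s
      rw [hb0] at h2
      rw [if_pos hb0, if_neg hb1] at h
      omega
    · have h2 := hT1e
      rw [hb1] at h2
      rw [if_neg hb0, if_pos hb1] at h
      omega
    · have h2 := hle v
      rw [if_neg hb0, if_neg hb1] at h
      omega
  -- find a second deficient start vertex
  set Q : Finset V := insert (S₁.vs 0) (insert (S₁.vs S₁.len) (insert (S₂.vs 0)
    (insert (S₂.vs S₂.len) (insert (T₁.vs 0) {T₁.vs T₁.len})))) with hQdef
  have hind : ∀ x : V, x ∈ Q → (∑ w ∈ Q, (if x = w then (1:ℕ) else 0)) = 1 := by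
    intro x hx
    rw [Finset.sum_ite_eq]
    exact if_pos hx
  have hsN : ∑ w ∈ Q, G.deg N w = (∑ w ∈ Q, G.deg M w) + 4 := by
    rw [Finset.sum_congr rfl (fun w _ => hdegN w), Finset.sum_add_distrib,
      Finset.sum_add_distrib, Finset.sum_add_distrib, Finset.sum_add_distrib,
      hind _ (by simp [hQdef]), hind _ (by simp [hQdef]), hind _ (by simp [hQdef]),
      hind _ (by simp [hQdef])]
    omega
  have hsM₁ : ∑ w ∈ Q, G.deg (symmDiff M T₁.edgeSet) w = (∑ w ∈ Q, G.deg M w) + 2 := by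
    rw [Finset.sum_congr rfl (fun w _ => hdegT1 w), Finset.sum_add_distrib,
      Finset.sum_add_distrib, hind _ (by simp [hQdef]), hind _ (by simp [hQdef])]
  have hex2 : ∃ w, G.deg (symmDiff M T₁.edgeSet) w + 1 ≤ G.deg N w := by
    by_contra hc
    push_neg at hc
    have hss := Finset.sum_le_sum (s := Q)
      (fun w _ => Nat.lt_succ_iff.mp (hc w))
    omega
  obtain ⟨a₂, ha₂⟩ := hex2
  obtain ⟨T₂, hT2aug, hT2sub, -, -, -⟩ := exists_aug G f hM₁ hNm hle2 ha₂
  -- edge-set algebra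
  have hD12 : symmDiff M N = symmDiff S₁.edgeSet S₂.edgeSet := by
    rw [hNdef, symmDiff_assoc, symmDiff_symmDiff_cancel_left]
  have hsdT : symmDiff (symmDiff M T₁.edgeSet) N = (symmDiff M N) \ T₁.edgeSet := by
    rw [symmDiff_comm M T₁.edgeSet, symmDiff_assoc]
    ext e
    rw [Finset.mem_symmDiff, Finset.mem_sdiff]
    constructor
    · rintro (⟨h1, h2⟩ | ⟨h1, h2⟩)
      · exact absurd (hT1sub h1) h2
      · exact ⟨h1, h2⟩
    · rintro ⟨h1, h2⟩
      exact Or.inr ⟨h1, h2⟩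
  rw [hsdT] at hT2sub
  have hT2notT1 : ∀ e ∈ T₂.edgeSet, e ∉ T₁.edgeSet :=
    fun e he => (Finset.mem_sdiff.mp (hT2sub he)).2
  have hsame : ∀ e ∈ T₂.edgeSet, (e ∈ symmDiff M T₁.edgeSet ↔ e ∈ M) :=
    fun e he => mem_symmDiff_of_not_mem (hT2notT1 e he)
  obtain ⟨⟨hWT2, hinjT2⟩, hlenT2, hoddT2, haltT2, h0T2, hlastT2, hf0T2, hf1T2, hclT2⟩ := hT2aug
  have hT2es : ∀ i, i < T₂.len → T₂.es i ∈ T₂.edgeSet :=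
    fun i hi => Finset.mem_image.mpr ⟨i, Finset.mem_range.mpr hi, rfl⟩
  have hT2augM : IsAugTrail G f M T₂ := by
    refine ⟨⟨hWT2, hinjT2⟩, hlenT2, hoddT2, ?_, ?_, ?_, ?_, ?_, ?_⟩
    · intro i hi
      have h := haltT2 i hi
      have e1 := hsame _ (hT2es i (by omega))
      have e2 := hsame _ (hT2es (i+1) hi)
      rw [← e1, ← e2]
      exact h
    · have e1 := hsame _ (hT2es 0 (by omega))
      exact fun hm => h0T2 (e1.mpr hm)
    · have e1 := hsame _ (hT2es (T₂.len - 1) (by omega))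
      exact fun hm => hlastT2 (e1.mpr hm)
    · have := hdegT1 (T₂.vs 0)
      omega
    · have := hdegT1 (T₂.vs T₂.len)
      omega
    · intro hcl
      have := hdegT1 (T₂.vs 0)
      have := hclT2 hcl
      omega
  -- cardinality bookkeeping
  have hc1 : T₁.edgeSet.card = T₁.len := trail_card hinjT1
  have hc2 : T₂.edgeSet.card = T₂.len := trail_card hinjT2
  have hdisj : Disjoint T₁.edgeSet T₂.edgeSet := by
    rw [Finset.disjoint_right]
    intro e he
    exact hT2notT1 e he
  have hsubU : T₁.edgeSet ∪ T₂.edgeSet ⊆ symmDiff M N := by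
    intro e he
    rcases Finset.mem_union.mp he with h | h
    · exact hT1sub h
    · exact (Finset.mem_sdiff.mp (hT2sub h)).1
  have hcu : T₁.len + T₂.len ≤ (symmDiff M N).card := by
    have h := Finset.card_le_card hsubU
    rw [Finset.card_union_of_disjoint hdisj] at h
    omega
  have hcd : (symmDiff M N).card ≤ S₁.len + S₂.len := by
    have hsub' : symmDiff S₁.edgeSet S₂.edgeSet ⊆ S₁.edgeSet ∪ S₂.edgeSet := by
      intro e he
      rw [Finset.mem_symmDiff] at he
      rw [Finset.mem_union]
      tauto
    have hh1 := Finset.card_le_card hsub'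
    have hh2 := Finset.card_union_le S₁.edgeSet S₂.edgeSet
    have hh3 := edgeSet_card_le S₁
    have hh4 := edgeSet_card_le S₂
    rw [hD12]
    omega
  have hm1 := hmin1 T₁ hT1aug
  have hm2 := hmin1 T₂ hT2augM
  omega
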